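/- Let N ≥ 2 and consider the class of N-player bargaining problems ⟨S,d⟩ where S ⊆ ℝ^N is compact and convex, d ∈ S, and there exists s ∈ S with d_n < s_n for every coordinate n. Suppose F is a bargaining solution (a map assigning to each such problem ⟨S,d⟩ a point F(⟨S,d⟩) ∈ S) satisfying: (LIN) for every choice of α_n > 0 and β_n ∈ ℝ, if ⟨S',d'⟩ is obtained from ⟨S,d⟩ by the coordinatewise affine map s'_n = α_n s_n + β_n, then F_n(⟨S',d'⟩) = α_n F_n(⟨S,d⟩) + β_n for all n; (SYM) if S and d are invariant under swapping coordinates m and n, then F_m(⟨S,d⟩) = F_n(⟨S,d⟩); (PAR) F(⟨S,d⟩) is Pareto optimal in S, i.e. if t ∈ S and F(⟨S,d⟩) ≤ t coordinatewise then t = F(⟨S,d⟩); (IIA) if S ⊆ T, F(⟨T,d⟩) ∈ S, then F(⟨S,d⟩) = F(⟨T,d⟩). Then F is uniquely determined and is given by F(⟨S,d⟩) = argmax over {s ∈ S : d ≤ s coordinatewise} of the Nash product ∏_{n=1}^N (s_n − d_n). -/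

import Mathlib

/-- An `N`-player bargaining problem `⟨S, d⟩`: `S ⊆ ℝ^N` is compact and convex,
the disagreement point `d` belongs to `S`, and some feasible point strictly
dominates `d` in every coordinate. -/
def ValidBargainingProblem (N : ℕ) (S : Set (Fin N → ℝ)) (d : Fin N → ℝ) : Prop :=
  IsCompact S ∧ Convex ℝ S ∧ d ∈ S ∧ ∃ s ∈ S, ∀ n, d n < s n

/-- The Nash product relative to the disagreement point `d`. -/
noncomputable def nashProduct {N : ℕ} (d s : Fin N → ℝ) : ℝ :=
  ∏ n, (s n - d n)

open Filter Topology

lemma nashProduct_continuous {N : ℕ} (d : Fin N → ℝ) : Continuous (nashProduct d) := by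
  unfold nashProduct
  exact continuous_finset_prod _ fun i _ => (continuous_apply i).sub continuous_const

lemma NB.exists_max {N : ℕ} {S : Set (Fin N → ℝ)} {d : Fin N → ℝ}
    (hval : ValidBargainingProblem N S d) :
    ∃ u ∈ {s ∈ S | ∀ n, d n ≤ s n},
      IsMaxOn (nashProduct d) {s ∈ S | ∀ n, d n ≤ s n} u := by
  obtain ⟨hcomp, -, hd, -⟩ := hval
  have hKcl : IsClosed {s : Fin N → ℝ | ∀ n, d n ≤ s n} := by
    have : {s : Fin N → ℝ | ∀ n, d n ≤ s n} = ⋂ n, {s | d n ≤ s n} := by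
      ext s; simp [Set.mem_iInter]
    rw [this]
    exact isClosed_iInter fun n => isClosed_le continuous_const (continuous_apply n)
  have hKcomp : IsCompact {s ∈ S | ∀ n, d n ≤ s n} :=
    hcomp.inter_right hKcl
  exact hKcomp.exists_isMaxOn ⟨d, hd, fun n => le_rfl⟩ (nashProduct_continuous d).continuousOn

lemma NB.max_pos {N : ℕ} {S : Set (Fin N → ℝ)} {d : Fin N → ℝ}
    (hval : ValidBargainingProblem N S d) {u : Fin N → ℝ}
    (hu : u ∈ {s ∈ S | ∀ n, d n ≤ s n})
    (hmax : IsMaxOn (nashProduct d) {s ∈ S | ∀ n, d n ≤ s n} u) :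
    ∀ n, d n < u n := by
  obtain ⟨-, -, -, s₀, hs₀S, hs₀⟩ := hval
  have hs₀K : s₀ ∈ {s ∈ S | ∀ n, d n ≤ s n} := ⟨hs₀S, fun n => (hs₀ n).le⟩
  have hpos : 0 < nashProduct d u :=
    lt_of_lt_of_le (Finset.prod_pos fun n _ => sub_pos.2 (hs₀ n)) (hmax hs₀K)
  intro n
  rcases lt_or_eq_of_le (hu.2 n) with h | h
  · exact h
  · exfalso
    have : nashProduct d u = 0 :=
      Finset.prod_eq_zero (Finset.mem_univ n) (by rw [← h]; ring)
    linarith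

lemma NB.max_unique {N : ℕ} {S : Set (Fin N → ℝ)} {d : Fin N → ℝ}
    (hval : ValidBargainingProblem N S d) {u v : Fin N → ℝ}
    (hu : u ∈ {s ∈ S | ∀ n, d n ≤ s n}) (hv : v ∈ {s ∈ S | ∀ n, d n ≤ s n})
    (hmaxu : IsMaxOn (nashProduct d) {s ∈ S | ∀ n, d n ≤ s n} u)
    (hmaxv : IsMaxOn (nashProduct d) {s ∈ S | ∀ n, d n ≤ s n} v) :
    u = v := by
  by_contra hne
  obtain ⟨n₀, hn₀⟩ : ∃ n, u n ≠ v n := Function.ne_iff.1 hne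
  have hupos := NB.max_pos hval hu hmaxu
  have hvpos := NB.max_pos hval hv hmaxv
  have hP : nashProduct d u = nashProduct d v := le_antisymm (hmaxv hu) (hmaxu hv)
  set w : Fin N → ℝ := fun n => (1/2 : ℝ) * u n + (1/2 : ℝ) * v n with hw
  have hwS : w ∈ S := by
    have h := hval.2.1 hu.1 hv.1 (by norm_num : (0:ℝ) ≤ 1/2) (by norm_num : (0:ℝ) ≤ 1/2)
      (by norm_num : (1/2 : ℝ) + 1/2 = 1)
    have hwEq : w = (1/2 : ℝ) • u + (1/2 : ℝ) • v := by
      funext n; simp [hw]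
    rw [hwEq]; exact h
  have hwK : w ∈ {s ∈ S | ∀ n, d n ≤ s n} := by
    refine ⟨hwS, fun n => ?_⟩
    have h1 := hupos n; have h2 := hvpos n
    simp only [hw]; linarith
  have hwpos : ∀ n, 0 < w n - d n := by
    intro n; have h1 := hupos n; have h2 := hvpos n; simp only [hw]; linarith
  have hP2 : nashProduct d u * nashProduct d v < (nashProduct d w) ^ 2 := by
    unfold nashProduct
    rw [← Finset.prod_mul_distrib, sq, ← Finset.prod_mul_distrib]
    refine Finset.prod_lt_prod ?_ ?_ ?_
    · intro j _
      exact mul_pos (sub_pos.2 (hupos j)) (sub_pos.2 (hvpos j))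
    · intro j _
      have h1 := hupos j; have h2 := hvpos j
      simp only [hw]; nlinarith [sq_nonneg (u j - v j)]
    · refine ⟨n₀, Finset.mem_univ n₀, ?_⟩
      have h1 := hupos n₀; have h2 := hvpos n₀
      have h3 : 0 < (u n₀ - v n₀) ^ 2 :=
        (sq_nonneg _).lt_of_ne (Ne.symm (pow_ne_zero 2 (sub_ne_zero.mpr hn₀)))
      simp only [hw]; nlinarith [h3]
  have hQpos : 0 < nashProduct d w := Finset.prod_pos fun n _ => hwpos n
  have hPpos : 0 < nashProduct d u := Finset.prod_pos fun n _ => sub_pos.2 (hupos n)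
  have hlt : nashProduct d u < nashProduct d w := by nlinarith
  exact absurd (hmaxu hwK) (not_le.2 hlt)


lemma NB.sum_le {N : ℕ} {S' : Set (Fin N → ℝ)} (hconv : Convex ℝ S')
    (hone : (fun _ => (1:ℝ)) ∈ S')
    (hmax : IsMaxOn (nashProduct (fun _ => 0)) {s ∈ S' | ∀ n, 0 ≤ s n} (fun _ => (1:ℝ))) :
    ∀ s ∈ S', ∑ n, s n ≤ (N : ℝ) := by
  intro s hs
  by_contra hcon
  push_neg at hcon
  set c : Fin N → ℝ := fun n => s n - 1 with hc
  have hcsum : 0 < ∑ n, c n := by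
    simp only [hc, Finset.sum_sub_distrib, Finset.sum_const, Finset.card_univ,
      Fintype.card_fin, nsmul_eq_mul, mul_one]
    linarith
  set f : ℝ → ℝ := fun t => ∏ n, (1 + t * c n) with hf
  have hder : HasDerivAt f (∑ n, c n) 0 := by
    have h1 : ∀ i ∈ Finset.univ, HasDerivAt (fun t : ℝ => 1 + t * c i) (c i) 0 :=
      fun i _ => by simpa using ((hasDerivAt_id (0:ℝ)).mul_const (c i)).const_add 1
    have h2 := HasDerivAt.fun_finsetProd h1
    simpa [hf] using h2
  rw [hasDerivAt_iff_tendsto_slope] at hder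
  have hmono : 𝓝[>] (0:ℝ) ≤ 𝓝[≠] (0:ℝ) :=
    nhdsWithin_mono 0 fun x hx => ne_of_gt hx
  have hslope : ∀ᶠ t in 𝓝[>] (0:ℝ), 0 < slope f 0 t :=
    (hder.mono_left hmono).eventually_const_lt hcsum
  set C : ℝ := 1 + ∑ n, |c n| with hC
  have hCpos : 0 < C := by
    have : 0 ≤ ∑ n, |c n| := Finset.sum_nonneg fun n _ => abs_nonneg _
    simp only [hC]; linarith
  have hcb : ∀ n, |c n| < C := by
    intro n
    have : |c n| ≤ ∑ m, |c m| :=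
      Finset.single_le_sum (fun m _ => abs_nonneg (c m)) (Finset.mem_univ n)
    simp only [hC]; linarith
  have hioo : Set.Ioo (0:ℝ) (min 1 C⁻¹) ∈ 𝓝[>] (0:ℝ) :=
    Ioo_mem_nhdsGT (lt_min one_pos (inv_pos.2 hCpos))
  obtain ⟨t, hts, htI⟩ := (hslope.and (Filter.eventually_of_mem hioo fun x hx => hx)).exists
  obtain ⟨ht0, htlt⟩ := htI
  have ht1 : t < 1 := lt_of_lt_of_le htlt (min_le_left _ _)
  have htC : t < C⁻¹ := lt_of_lt_of_le htlt (min_le_right _ _)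
  -- f t > 1
  have hf0 : f 0 = 1 := by simp [hf]
  have hslope' : slope f 0 t = (f t - 1) / t := by
    rw [slope_def_field, hf0]; ring_nf
  have hft : 1 < f t := by
    rw [hslope'] at hts
    have := mul_pos hts ht0
    rw [div_mul_cancel₀] at this
    · linarith
    · exact ne_of_gt ht0
  -- the point w
  set w : Fin N → ℝ := fun n => 1 + t * c n with hwdef
  have hwS : w ∈ S' := by
    have h := hconv hone hs (by linarith : (0:ℝ) ≤ 1 - t) (le_of_lt ht0) (by ring)
    have hwEq : w = (1 - t) • (fun _ => (1:ℝ)) + t • s := by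
      funext n; simp [hwdef, hc]; ring
    rw [hwEq]; exact h
  have hwpos : ∀ n, 0 ≤ w n := by
    intro n
    have h1 : t * |c n| < 1 := by
      calc t * |c n| ≤ t * C := by nlinarith [hcb n]
        _ < C⁻¹ * C := by nlinarith
        _ = 1 := inv_mul_cancel₀ (ne_of_gt hCpos)
    have h2 : -(t * |c n|) ≤ t * c n := by nlinarith [neg_abs_le (c n), abs_nonneg (c n)]
    simp only [hwdef]; linarith
  have := hmax ⟨hwS, hwpos⟩
  have heq : nashProduct (fun _ => (0:ℝ)) w = f t := by
    simp [nashProduct, hwdef, hf]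
  have heq1 : nashProduct (fun _ : Fin N => (0:ℝ)) (fun _ : Fin N => (1:ℝ)) = 1 := by
    simp [nashProduct]
  rw [Set.mem_setOf_eq, heq, heq1] at this
  linarith


lemma NB.T_valid {N : ℕ} (hN : 1 ≤ N) {M : ℝ} (hM : 0 ≤ M) :
    ValidBargainingProblem N {s : Fin N → ℝ | ∑ n, s n ≤ (N:ℝ) ∧ ∀ n, -M ≤ s n}
      (fun _ => 0) := by
  set T : Set (Fin N → ℝ) := {s | ∑ n, s n ≤ (N:ℝ) ∧ ∀ n, -M ≤ s n} with hT
  have hclosed : IsClosed T := by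
    have : T = {s : Fin N → ℝ | ∑ n, s n ≤ (N:ℝ)} ∩ ⋂ n, {s | -M ≤ s n} := by
      ext s; simp [hT, Set.mem_iInter]
    rw [this]
    exact (isClosed_le (continuous_finset_sum _ fun i _ => continuous_apply i)
      continuous_const).inter
      (isClosed_iInter fun n => isClosed_le continuous_const (continuous_apply n))
  have hsub : T ⊆ Set.Icc (fun _ => -M) (fun _ => (N:ℝ) + N * M) := by
    intro s hs
    constructor
    · intro n; exact hs.2 n
    · intro n
      have h2 : s n + ∑ m ∈ Finset.univ.erase n, s m = ∑ m, s m :=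
        Finset.add_sum_erase _ _ (Finset.mem_univ n)
      have h1 : ∑ m ∈ Finset.univ.erase n, (-M) ≤ ∑ m ∈ Finset.univ.erase n, s m :=
        Finset.sum_le_sum fun m _ => hs.2 m
      rw [Finset.sum_const, nsmul_eq_mul] at h1
      have hcard : ((Finset.univ.erase n).card : ℝ) ≤ (N : ℝ) := by
        have := Finset.card_le_univ (Finset.univ.erase n)
        simp only [Finset.card_univ, Fintype.card_fin] at this
        exact_mod_cast this
      have hcard0 : (0:ℝ) ≤ ((Finset.univ.erase n).card : ℝ) := by positivity
      have hsum := hs.1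
      show s n ≤ (N:ℝ) + N * M
      nlinarith
  have hcomp : IsCompact T := (isCompact_Icc).of_isClosed_subset hclosed hsub
  have hconv : Convex ℝ T := by
    intro x hx y hy a b ha hb hab
    constructor
    · have : ∑ n, (a • x + b • y) n = a * ∑ n, x n + b * ∑ n, y n := by
        simp [Finset.mul_sum, Finset.sum_add_distrib]
      rw [this]
      nlinarith [hx.1, hy.1]
    · intro n
      have h1 := hx.2 n; have h2 := hy.2 n
      simp only [Pi.add_apply, Pi.smul_apply, smul_eq_mul]
      nlinarith
  have hN' : (0:ℝ) < N := by exact_mod_cast hN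
  have hNinv : (0:ℝ) < (N:ℝ)⁻¹ := inv_pos.2 hN'
  refine ⟨hcomp, hconv, ⟨by simp, fun n => by simpa using hM⟩,
    fun _ => (N : ℝ)⁻¹, ⟨?_, fun n => by simpa using le_trans (by linarith) hNinv.le⟩,
    fun n => by simpa using hNinv⟩
  · show ∑ _k : Fin N, (N:ℝ)⁻¹ ≤ (N:ℝ)
    rw [Finset.sum_const, Finset.card_univ, Fintype.card_fin, nsmul_eq_mul,
      mul_inv_cancel₀ hN'.ne']
    exact_mod_cast hN

lemma NB.T_swap {N : ℕ} {M : ℝ} (m n : Fin N) :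
    (fun s : Fin N → ℝ => s ∘ Equiv.swap m n) ''
      {s : Fin N → ℝ | ∑ k, s k ≤ (N:ℝ) ∧ ∀ k, -M ≤ s k}
      = {s : Fin N → ℝ | ∑ k, s k ≤ (N:ℝ) ∧ ∀ k, -M ≤ s k} := by
  have hmem : ∀ s : Fin N → ℝ, (∑ k, s k ≤ (N:ℝ) ∧ ∀ k, -M ≤ s k) →
      s ∘ Equiv.swap m n ∈ {s : Fin N → ℝ | ∑ k, s k ≤ (N:ℝ) ∧ ∀ k, -M ≤ s k} := by
    intro s hs
    refine ⟨?_, fun k => hs.2 _⟩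
    have : ∑ k, (s ∘ Equiv.swap m n) k = ∑ k, s k :=
      Fintype.sum_equiv (Equiv.swap m n) _ _ fun k => rfl
    rw [this]; exact hs.1
  apply Set.Subset.antisymm
  · rintro x ⟨s, hs, rfl⟩
    exact hmem s hs
  · intro s hs
    refine ⟨s ∘ Equiv.swap m n, hmem s hs, ?_⟩
    funext k
    simp [Function.comp, Equiv.swap_apply_self]


lemma NB.affine_valid {N : ℕ} {S : Set (Fin N → ℝ)} {d : Fin N → ℝ}
    (hval : ValidBargainingProblem N S d) (α β : Fin N → ℝ) (hα : ∀ n, 0 < α n) :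
    ValidBargainingProblem N ((fun s n => α n * s n + β n) '' S)
      (fun n => α n * d n + β n) := by
  obtain ⟨hcomp, hconv, hd, s₀, hs₀S, hs₀⟩ := hval
  have hcont : Continuous (fun s : Fin N → ℝ => fun n => α n * s n + β n) :=
    continuous_pi fun n => (continuous_const.mul (continuous_apply n)).add continuous_const
  refine ⟨hcomp.image hcont, ?_, ⟨d, hd, rfl⟩,
    fun n => α n * s₀ n + β n, ⟨s₀, hs₀S, rfl⟩,
    fun n => by
      show α n * d n + β n < α n * s₀ n + β n
      have := hα n; have := hs₀ n; nlinarith⟩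
  rintro x ⟨p, hp, rfl⟩ y ⟨q, hq, rfl⟩ a b ha hb hab
  refine ⟨a • p + b • q, hconv hp hq ha hb hab, ?_⟩
  funext n
  simp only [Pi.add_apply, Pi.smul_apply, smul_eq_mul]
  linear_combination (-(β n)) * hab



/-- Nash's theorem: a bargaining solution `F` satisfying LIN, SYM, PAR and IIA
is uniquely determined, and is given by the maximizer of the Nash product
over the points of `S` dominating `d`. -/
theorem nash_bargaining_solution_unique (N : ℕ) (hN : 2 ≤ N)
    (F : Set (Fin N → ℝ) → (Fin N → ℝ) → (Fin N → ℝ))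
    (hmem : ∀ S d, ValidBargainingProblem N S d → F S d ∈ S)
    (hLIN : ∀ S d, ValidBargainingProblem N S d →
      ∀ α β : Fin N → ℝ, (∀ n, 0 < α n) →
        ∀ n, F ((fun s n => α n * s n + β n) '' S) (fun n => α n * d n + β n) n
              = α n * F S d n + β n)
    (hSYM : ∀ S d, ValidBargainingProblem N S d → ∀ m n : Fin N,
      (fun s : Fin N → ℝ => s ∘ Equiv.swap m n) '' S = S →
      d ∘ Equiv.swap m n = d →
      F S d m = F S d n)
    (hPAR : ∀ S d, ValidBargainingProblem N S d →
      ∀ t ∈ S, (∀ n, F S d n ≤ t n) → t = F S d)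
    (hIIA : ∀ S T d, ValidBargainingProblem N S d → ValidBargainingProblem N T d →
      S ⊆ T → F T d ∈ S → F S d = F T d) :
    ∀ S d, ValidBargainingProblem N S d →
      F S d ∈ {s ∈ S | ∀ n, d n ≤ s n} ∧
      IsMaxOn (nashProduct d) {s ∈ S | ∀ n, d n ≤ s n} (F S d) ∧
      ∀ t ∈ {s ∈ S | ∀ n, d n ≤ s n},
        IsMaxOn (nashProduct d) {s ∈ S | ∀ n, d n ≤ s n} t → t = F S d := by
  intro S d hval
  obtain ⟨u, hu, hmaxu⟩ := NB.exists_max hval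
  have hupos := NB.max_pos hval hu hmaxu
  have hepos : ∀ n, 0 < u n - d n := fun n => sub_pos.2 (hupos n)
  set α : Fin N → ℝ := fun n => (u n - d n)⁻¹ with hα_def
  set β : Fin N → ℝ := fun n => -((u n - d n)⁻¹ * d n) with hβ_def
  have hαpos : ∀ n, 0 < α n := fun n => inv_pos.2 (hepos n)
  set φ : (Fin N → ℝ) → (Fin N → ℝ) := fun s n => α n * s n + β n with hφ_def
  set S' : Set (Fin N → ℝ) := φ '' S with hS'_def
  set d0 : Fin N → ℝ := fun _ => 0 with hd0_def
  have hφd : (fun n => α n * d n + β n) = d0 := by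
    funext n; simp only [hα_def, hβ_def, hd0_def]; ring
  have hφu : φ u = fun _ => 1 := by
    funext n
    simp only [hφ_def, hα_def, hβ_def]
    have h2 : (u n - d n)⁻¹ * u n + -((u n - d n)⁻¹ * d n)
        = (u n - d n)⁻¹ * (u n - d n) := by ring
    rw [h2, inv_mul_cancel₀ (hepos n).ne']
  have hS'val : ValidBargainingProblem N S' d0 := by
    rw [hS'_def, hφ_def, ← hφd]
    exact NB.affine_valid hval α β hαpos
  have hαprodpos : 0 < ∏ n, α n := Finset.prod_pos fun n _ => hαpos n
  have htrans : ∀ s : Fin N → ℝ, nashProduct d0 (φ s) = (∏ n, α n) * nashProduct d s := by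
    intro s
    simp only [nashProduct, hφ_def, hd0_def, ← Finset.prod_mul_distrib]
    refine Finset.prod_congr rfl fun n _ => ?_
    simp only [hβ_def]; ring
  have h1S' : (fun _ => (1:ℝ)) ∈ S' := ⟨u, hu.1, hφu⟩
  have hmax1 : IsMaxOn (nashProduct d0) {s ∈ S' | ∀ n, 0 ≤ s n} (fun _ => (1:ℝ)) := by
    rintro x ⟨⟨s, hsS, rfl⟩, hxpos⟩
    have hsK : s ∈ {s ∈ S | ∀ n, d n ≤ s n} := by
      refine ⟨hsS, fun n => ?_⟩
      have h1 := hxpos n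
      simp only [hφ_def, hα_def, hβ_def] at h1
      by_contra hlt
      push_neg at hlt
      have h2 : (u n - d n)⁻¹ * s n + -((u n - d n)⁻¹ * d n)
          = (u n - d n)⁻¹ * (s n - d n) := by ring
      rw [h2] at h1
      nlinarith [inv_pos.2 (hepos n)]
    show nashProduct d0 (φ s) ≤ nashProduct d0 (fun _ => (1:ℝ))
    rw [← hφu, htrans s, htrans u]
    exact mul_le_mul_of_nonneg_left (hmaxu hsK) hαprodpos.le
  have hsumS' : ∀ s ∈ S', ∑ n, s n ≤ (N : ℝ) := by
    have := NB.sum_le hS'val.2.1 (by exact h1S') (by rw [hd0_def] at hmax1; exact hmax1)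
    exact this
  -- bound
  obtain ⟨R, hR⟩ := isBounded_iff_forall_norm_le.1 hS'val.1.isBounded
  set M : ℝ := max R 0 with hM_def
  have hM0 : 0 ≤ M := le_max_right R 0
  have hMb : ∀ s ∈ S', ∀ n, -M ≤ s n := by
    intro s hs n
    have h1 := hR s hs
    have h2 : |s n| ≤ ‖s‖ := by
      have := norm_le_pi_norm s n
      simpa [Real.norm_eq_abs] using this
    have h3 := neg_abs_le (s n)
    have h4 : R ≤ M := le_max_left R 0
    linarith
  set T : Set (Fin N → ℝ) := {s | ∑ n, s n ≤ (N:ℝ) ∧ ∀ n, -M ≤ s n} with hT_def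
  have hTval : ValidBargainingProblem N T d0 := by
    rw [hT_def, hd0_def]
    exact NB.T_valid (by omega) hM0
  have hsub : S' ⊆ T := fun s hs => ⟨hsumS' s hs, hMb s hs⟩
  -- symmetry gives F T d0 constant
  have hconst : ∀ m n : Fin N, F T d0 m = F T d0 n := by
    intro m n
    refine hSYM T d0 hTval m n ?_ ?_
    · rw [hT_def]; exact NB.T_swap m n
    · rfl
  have hn0 : (0 : ℕ) < N := by omega
  set n0 : Fin N := ⟨0, hn0⟩ with hn0_def
  have hFTmem := hmem T d0 hTval
  have hNpos : (0:ℝ) < N := by exact_mod_cast hn0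
  have hsum_eq : ∑ n, F T d0 n = (N:ℝ) * F T d0 n0 := by
    rw [Finset.sum_congr rfl fun n _ => hconst n n0]
    simp [Finset.card_univ]
  have hc1 : F T d0 n0 ≤ 1 := by
    have h1 : ∑ n, F T d0 n ≤ (N:ℝ) := hFTmem.1
    rw [hsum_eq] at h1
    nlinarith
  have honeT : (fun _ => (1:ℝ)) ∈ T := by
    refine ⟨by simp, fun n => show (-M:ℝ) ≤ 1 by linarith⟩
  have hFT : (fun _ => (1:ℝ)) = F T d0 :=
    hPAR T d0 hTval _ honeT (fun n => by rw [hconst n n0]; exact hc1)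
  have hFS' : F S' d0 = fun _ => (1:ℝ) := by
    rw [hIIA S' T d0 hS'val hTval hsub (by rw [← hFT]; exact h1S')]
    exact hFT.symm
  -- transport back
  have hFSd : F S d = u := by
    funext n
    have h := hLIN S d hval α β hαpos n
    rw [show ((fun s n => α n * s n + β n) '' S) = S' from by rw [hS'_def, hφ_def],
      hφd, hFS'] at h
    simp only [hα_def, hβ_def] at h
    have hne := (hepos n).ne'
    have h3 : (u n - d n)⁻¹ * (F S d n - d n) = 1 := by
      rw [mul_sub]; linarith [h]
    have h4 : u n - d n = F S d n - d n := (inv_mul_eq_one₀ hne).1 h3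
    linarith
  refine ⟨hFSd ▸ hu, hFSd ▸ hmaxu, ?_⟩
  intro t ht hmt
  rw [hFSd]
  exact NB.max_unique hval ht hu hmt hmaxu
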